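/- Let η > 0 and t > 0 and define K_η(t,x) = ∫_ℝ e^{2πi x ξ} e^{iξ³t − ηt(|ξ|³−|ξ|)} dξ. Then for all x ∈ ℝ, |K_η(t,x)| ≤ C e^{3ηt}/(ηt)^{1/3} for an absolute constant C > 0. -/

import Mathlib

open MeasureTheory

noncomputable def ostSymbol (η t ξ : ℝ) : ℂ :=
  Complex.exp (Complex.I * ((ξ ^ 3 * t : ℝ) : ℂ) - ((η * t * (|ξ| ^ 3 - |ξ|) : ℝ) : ℂ))

noncomputable def ostKernel (η t x : ℝ) : ℂ :=
  ∫ ξ : ℝ, Complex.exp (2 * Real.pi * Complex.I * ((x * ξ : ℝ) : ℂ)) * ostSymbol η t ξ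

open Real Set

lemma even_integrable {f : ℝ → ℝ} (hf : IntegrableOn f (Ioi 0)) :
    Integrable (fun x => f |x|) := by
  have hIoi : IntegrableOn (fun x => f |x|) (Ioi 0) := by
    refine hf.congr_fun (fun x hx => ?_) measurableSet_Ioi
    rw [abs_eq_self.mpr (le_of_lt hx)]
  have hIic : IntegrableOn (fun x ↦ f |x|) (Iic 0) := by
    rw [← Measure.map_neg_eq_self (volume : Measure ℝ)]
    have m : MeasurableEmbedding fun x : ℝ => -x := (Homeomorph.neg ℝ).measurableEmbedding
    rw [m.integrableOn_map_iff]
    simp_rw [Function.comp_def, abs_neg, neg_preimage, neg_Iic, neg_zero]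
    exact Iff.mpr integrableOn_Ici_iff_integrableOn_Ioi hIoi
  have := hIic.union hIoi
  rw [Iic_union_Ioi] at this
  exact integrableOn_univ.mp this

lemma norm_eq (η t x ξ : ℝ) :
    ‖Complex.exp (2 * Real.pi * Complex.I * ((x * ξ : ℝ) : ℂ)) * ostSymbol η t ξ‖
      = Real.exp (-(η * t * (|ξ| ^ 3 - |ξ|))) := by
  rw [ostSymbol, norm_mul, Complex.norm_exp,
    Complex.norm_exp]
  have h1 : (2 * Real.pi * Complex.I * ((x * ξ : ℝ) : ℂ)).re = 0 := by simp
  have h2 : (Complex.I * ((ξ ^ 3 * t : ℝ) : ℂ) - ((η * t * (|ξ| ^ 3 - |ξ|) : ℝ) : ℂ)).re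
      = -(η * t * (|ξ| ^ 3 - |ξ|)) := by
    rw [Complex.sub_re, Complex.ofReal_re, Complex.mul_re, Complex.I_re, Complex.I_im,
      Complex.ofReal_re, Complex.ofReal_im]
    ring
  rw [h1, h2, Real.exp_zero, one_mul]

theorem stmt5 : ∃ C > (0:ℝ), ∀ η t x : ℝ, 0 < η → 0 < t →
    ‖ostKernel η t x‖ ≤ C * Real.exp (3 * η * t) / (η * t) ^ ((1:ℝ)/3) := by
  set Γ := Real.Gamma (1/3 + 1) with hΓdef
  have hΓpos : 0 < Γ := Real.Gamma_pos_of_pos (by norm_num)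
  refine ⟨4 * Γ, by positivity, fun η t x hη ht => ?_⟩
  set a := η * t with ha
  have hapos : 0 < a := mul_pos hη ht
  set g : ℝ → ℝ := fun ξ => Real.exp a * Real.exp (-(a/2) * |ξ| ^ (3:ℝ)) with hg
  have hgint : Integrable g := by
    have h0 : IntegrableOn (fun x : ℝ => Real.exp (-(a/2) * x ^ (3:ℝ))) (Ioi 0) := by
      have := integrableOn_rpow_mul_exp_neg_mul_rpow (s := 0) (p := 3) (b := a/2)
        (by norm_num) (by norm_num) (by positivity)
      refine this.congr_fun (fun x hx => ?_) measurableSet_Ioi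
      dsimp only; rw [Real.rpow_zero, one_mul]
    exact (even_integrable h0).const_mul _
  have hcube : ∀ ξ : ℝ, |ξ| ^ (3:ℝ) = |ξ| ^ (3:ℕ) := by
    intro ξ; rw [← Real.rpow_natCast |ξ| 3]; norm_num
  have hbound : ∀ ξ : ℝ, Real.exp (-(a * (|ξ| ^ 3 - |ξ|))) ≤ g ξ := by
    intro ξ
    simp only [hg, ← Real.exp_add]
    apply Real.exp_le_exp.mpr
    have hξ : (0:ℝ) ≤ |ξ| := abs_nonneg ξ
    rw [hcube ξ]
    nlinarith [sq_nonneg (|ξ| - 1), mul_nonneg hξ (sq_nonneg (|ξ| - 1)), hapos.le]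
  have step1 : ‖ostKernel η t x‖ ≤ ∫ ξ : ℝ, g ξ := by
    refine (norm_integral_le_integral_norm _).trans ?_
    refine integral_mono_of_nonneg (Filter.Eventually.of_forall fun ξ => norm_nonneg _)
      hgint (Filter.Eventually.of_forall fun ξ => ?_)
    simp only [norm_eq]
    have e : -(η * t * (|ξ| ^ 3 - |ξ|)) = -(a * (|ξ| ^ 3 - |ξ|)) := by rw [ha]
    rw [e]
    exact hbound ξ
  have step2 : ∫ ξ : ℝ, g ξ = Real.exp a * (2 * ((a/2) ^ (-1/(3:ℝ)) * Γ)) := by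
    rw [hg, integral_const_mul]
    congr 1
    rw [integral_comp_abs (f := fun u => Real.exp (-(a/2) * u ^ (3:ℝ))),
      integral_exp_neg_mul_rpow (by norm_num) (by positivity)]
  rw [step2] at step1
  refine step1.trans ?_
  have h3 : (2:ℝ) ^ (1/(3:ℝ)) ≤ 2 := by
    nth_rewrite 2 [show (2:ℝ) = 2 ^ (1:ℝ) by rw [Real.rpow_one]]
    exact Real.rpow_le_rpow_of_exponent_le one_le_two (by norm_num)
  have hkey : (a/2) ^ (-1/(3:ℝ)) ≤ 2 / a ^ ((1:ℝ)/3) := by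
    have e1 : (a/2) ^ (-1/(3:ℝ)) = (2/a) ^ ((1:ℝ)/3) := by
      rw [show (-1/(3:ℝ)) = -(1/3) by norm_num, Real.rpow_neg (by positivity),
        ← Real.inv_rpow (by positivity), inv_div]
    rw [e1, Real.div_rpow (by norm_num) hapos.le]
    gcongr
  calc Real.exp a * (2 * ((a/2) ^ (-1/(3:ℝ)) * Γ))
      ≤ Real.exp (3 * η * t) * (2 * ((2 / a ^ ((1:ℝ)/3)) * Γ)) := by
        gcongr
        rw [ha]; nlinarith
    _ = 4 * Γ * Real.exp (3 * η * t) / a ^ ((1:ℝ)/3) := by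
        field_simp
        ring
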